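/- Let g : ℝ³ →ᵃ[ℝ] ℝ³ be an affine map and define the orbit x(n) = g^[n](x₀). If x(0) ≠ x(1) and the three consecutive points x(0), x(1), x(2) are collinear, then there exists λ ∈ ℝ such that the linear part of g maps x(1) − x(0) to λ • (x(1) − x(0)), the whole orbit satisfies x(n+2) − x(n+1) = λ • (x(n+1) − x(n)) for all n, and all orbit points x(n) lie on the line through x(0) and x(1). (Abstract form of Lemma 2: if three consecutive intersection points of a cycle with a boundary element lie on a straight line, the cycle is a λ-cycle.) -/

import Mathlib

/-- If `g : ℝ³ →ᵃ[ℝ] ℝ³` is an affine map, `x n = g^[n] x₀` its orbit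
with `x 0 ≠ x 1`, and the three consecutive points `x 0, x 1, x 2` are collinear,
then there is `λ ∈ ℝ` with `g.linear (x 1 - x 0) = λ • (x 1 - x 0)`, the whole orbit
satisfies `x (n+2) - x (n+1) = λ • (x (n+1) - x n)`, and all orbit points lie on the
line through `x 0` and `x 1`. -/
theorem affine_orbit_collinear_lambda_cycle
    (g : EuclideanSpace ℝ (Fin 3) →ᵃ[ℝ] EuclideanSpace ℝ (Fin 3))
    (x₀ : EuclideanSpace ℝ (Fin 3))
    (hne : g^[0] x₀ ≠ g^[1] x₀)
    (hcol : Collinear ℝ ({g^[0] x₀, g^[1] x₀, g^[2] x₀} :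
      Set (EuclideanSpace ℝ (Fin 3)))) :
    ∃ l : ℝ,
      g.linear (g^[1] x₀ - g^[0] x₀) = l • (g^[1] x₀ - g^[0] x₀) ∧
      (∀ n : ℕ, g^[n + 2] x₀ - g^[n + 1] x₀ = l • (g^[n + 1] x₀ - g^[n] x₀)) ∧
      ∀ n : ℕ, g^[n] x₀ ∈
        affineSpan ℝ ({g^[0] x₀, g^[1] x₀} : Set (EuclideanSpace ℝ (Fin 3))) := by
  set x : ℕ → EuclideanSpace ℝ (Fin 3) := fun n => g^[n] x₀ with hx
  have hstep : ∀ n, x (n + 1) = g (x n) := fun n => Function.iterate_succ_apply' g n x₀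
  set d : EuclideanSpace ℝ (Fin 3) := x 1 - x 0 with hd
  have hdne : d ≠ 0 := sub_ne_zero.2 (Ne.symm hne)
  have h0mem : x 0 ∈ ({x 0, x 1, x 2} : Set _) := by simp
  rw [collinear_iff_of_mem h0mem] at hcol
  obtain ⟨v, hv⟩ := hcol
  obtain ⟨r1, hr1⟩ := hv (x 1) (by simp)
  obtain ⟨r2, hr2⟩ := hv (x 2) (by simp)
  have hdv : d = r1 • v := by rw [hd, hr1]; simp [vadd_eq_add]
  have hr1ne : r1 ≠ 0 := by
    rintro rfl; apply hdne; rw [hdv, zero_smul]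
  set l : ℝ := r2 / r1 - 1 with hl
  have h21 : x 2 - x 1 = l • d := by
    rw [hr1, hr2, hdv]
    simp only [vadd_eq_add, smul_smul]
    rw [add_sub_add_right_eq_sub, ← sub_smul]
    congr 1
    field_simp [hl]
    rw [hl]; field_simp
  have hlin : g.linear d = l • d := by
    have h := g.linearMap_vsub (x 1) (x 0)
    simp only [vsub_eq_sub] at h
    rw [hd, h, ← hstep 1, ← hstep 0, h21]
  have hkey : ∀ n, x (n + 1) - x n = l ^ n • d := by
    intro n
    induction n with
    | zero => simp [hd]
    | succ k ih =>
      calc x (k + 2) - x (k + 1) = g.linear (x (k+1) - x k) := by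
            have h := g.linearMap_vsub (x (k+1)) (x k)
            simp only [vsub_eq_sub] at h
            rw [h, ← hstep (k+1), ← hstep k]
        _ = l ^ (k + 1) • d := by
            rw [ih, map_smul, hlin, smul_smul, ← pow_succ]
  refine ⟨l, hlin, fun n => ?_, fun n => ?_⟩
  · rw [show (g^[n+2] x₀ - g^[n+1] x₀ = x (n+2) - x (n+1)) from rfl,
      show (g^[n+1] x₀ - g^[n] x₀ = x (n+1) - x n) from rfl,
      hkey (n+1), hkey n, smul_smul, ← pow_succ']
  · have hexp : ∀ n, ∃ c : ℝ, x n = c • d + x 0 := by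
      intro n
      induction n with
      | zero => exact ⟨0, by simp⟩
      | succ k ih =>
        obtain ⟨c, hc⟩ := ih
        refine ⟨c + l ^ k, ?_⟩
        have hk := hkey k
        rw [hc] at hk
        have : x (k+1) = l ^ k • d + (c • d + x 0) := by rw [← hk]; abel
        rw [this, add_smul]; abel
    obtain ⟨c, hc⟩ := hexp n
    have hmem := smul_vsub_vadd_mem_affineSpan_pair (k := ℝ) c (x 0) (x 1)
    have heq : x n = c • (x 1 -ᵥ x 0) +ᵥ x 0 := by
      rw [hc, hd]; simp only [vsub_eq_sub, vadd_eq_add]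
    rw [show (g^[n] x₀ = x n) from rfl, heq]
    exact hmem
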